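/- Let K be a field of characteristic zero containing all roots of unity. A smooth conic C over K admitting an automorphism of finite order n ≥ 3 has a K-point. -/

import Mathlib

/-!
STATEMENT 13.  Let `K` be a field of characteristic zero containing all roots of unity.
A smooth conic over `K` is given by a nondegenerate quadratic form `q` in three
variables; its automorphisms are induced by elements of `PGL₃(K)` preserving `q` up to a
scalar, and a `K`-point of the conic is a nonzero isotropic vector of `q`.  If the conic
admits an automorphism of finite order `n ≥ 3`, then it has a `K`-point.
-/
open Polynomial

/-- An element of the center of `GL n K` is a scalar matrix. -/
lemma gl_center_scalar {K : Type*} [Field K] {x : GL (Fin 3) K}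
    (hx : x ∈ Subgroup.center (GL (Fin 3) K)) :
    ∃ d : K, (x : Matrix (Fin 3) (Fin 3) K) = d • 1 := by
  obtain ⟨d, hd⟩ := Matrix.mem_range_scalar_of_commute_transvectionStruct
      (M := (x : Matrix (Fin 3) (Fin 3) K)) (fun t => by
    have h := Subgroup.mem_center_iff.mp hx ⟨t.toMatrix, t.inv.toMatrix, t.mul_inv, t.inv_mul⟩
    have h2 : t.toMatrix * (x : Matrix (Fin 3) (Fin 3) K) = x * t.toMatrix := by
      simpa [Units.val_mul] using congrArg Units.val h
    exact h2)
  refine ⟨d, ?_⟩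
  rw [← hd, Matrix.scalar_apply, Matrix.smul_one_eq_diagonal]

/-- If a square of `A` is a nonzero scalar, the class of `A` in `PGL` has order dividing 2. -/
lemma order_dvd_two_of_sq_scalar {K : Type*} [Field K] (A : GL (Fin 3) K) (d : Kˣ)
    (hd : (A : Matrix (Fin 3) (Fin 3) K) * (A : Matrix (Fin 3) (Fin 3) K) = (d : K) • 1) :
    orderOf (QuotientGroup.mk A :
      GL (Fin 3) K ⧸ Subgroup.center (GL (Fin 3) K)) ∣ 2 := by
  have hcen : A * A ∈ Subgroup.center (GL (Fin 3) K) := by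
    rw [Subgroup.mem_center_iff]
    intro g
    apply Units.ext
    simp only [Units.val_mul, hd]
    rw [Matrix.mul_smul, Matrix.smul_mul, mul_one, one_mul]
  apply orderOf_dvd_of_pow_eq_one
  have : (QuotientGroup.mk (A * A) :
      GL (Fin 3) K ⧸ Subgroup.center (GL (Fin 3) K)) = 1 :=
    (QuotientGroup.eq_one_iff _).mpr hcen
  rw [pow_two, ← QuotientGroup.mk_mul, this]

set_option maxHeartbeats 1600000 in
theorem conic_with_order_ge_three_auto_has_point
    (K : Type*) [Field K] [CharZero K]
    (hroots : ∀ m : ℕ, 0 < m → ∃ ζ : K, IsPrimitiveRoot ζ m)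
    (q : QuadraticForm K (Fin 3 → K))
    (hsmooth : (QuadraticMap.polarBilin q).Nondegenerate)
    (A : GL (Fin 3) K)
    (hA : ∃ c : Kˣ, ∀ v : Fin 3 → K,
      q ((A : Matrix (Fin 3) (Fin 3) K).mulVec v) = (c : K) * q v)
    (n : ℕ) (hn : 3 ≤ n)
    (horder : orderOf (QuotientGroup.mk A :
      GL (Fin 3) K ⧸ Subgroup.center (GL (Fin 3) K)) = n) :
    ∃ v : Fin 3 → K, v ≠ 0 ∧ q v = 0 := by
  classical
  obtain ⟨c, hc⟩ := hA
  set k0 : K := (c : K) with hk0def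
  have hk0 : k0 ≠ 0 := c.ne_zero
  set M : Matrix (Fin 3) (Fin 3) K := (A : Matrix (Fin 3) (Fin 3) K) with hMdef
  set g : Module.End K (Fin 3 → K) := Matrix.toLinAlgEquiv' M with hgdef
  have hgapp : ∀ v, g v = M.mulVec v := fun v => Matrix.toLinAlgEquiv'_apply M v
  have hq : ∀ v, q (g v) = k0 * q v := fun v => by rw [hgapp]; exact hc v
  have hqs : ∀ (a : K) (v : Fin 3 → K), q (a • v) = a * a * q v := fun a v => by
    rw [QuadraticMap.map_smul, smul_eq_mul]
  -- if `A * A` is scalar, contradiction with the order hypothesis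
  have hA2 : ∀ d : Kˣ, M * M ≠ (d : K) • 1 := by
    intro d hd
    have := order_dvd_two_of_sq_scalar A d hd
    rw [horder] at this
    have := Nat.le_of_dvd (by norm_num) this
    omega
  -- `g * g` is not scalar either
  have hgg2 : ∀ d : Kˣ, g * g ≠ (d : K) • 1 := by
    intro d hd
    apply hA2 d
    apply Matrix.toLinAlgEquiv'.injective
    rw [map_mul, map_smul, map_one, ← hgdef]
    exact hd
  -- splitting a zero product of commuting operators
  have hsplit : ∀ P Q : Module.End K (Fin 3 → K), P * Q = 0 →
      (∃ u : Fin 3 → K, u ≠ 0 ∧ Q u = 0) ∨ P = 0 := by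
    intro P Q hPQ
    by_cases hker : ∀ u : Fin 3 → K, Q u = 0 → u = 0
    · right
      have hQinj : Function.Injective Q := by
        rw [← LinearMap.ker_eq_bot, LinearMap.ker_eq_bot']
        exact hker
      have hQsurj : Function.Surjective Q := LinearMap.injective_iff_surjective.mp hQinj
      apply LinearMap.ext
      intro w
      obtain ⟨u, rfl⟩ := hQsurj w
      have := LinearMap.ext_iff.mp hPQ u
      rw [Module.End.mul_apply] at this
      simpa using this
    · left
      push_neg at hker
      obtain ⟨u, h1, h2⟩ := hker
      exact ⟨u, h2, h1⟩
  -- trivial case: q vanishes identically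
  by_cases hq0 : ∀ v : Fin 3 → K, q v = 0
  · exact ⟨Pi.single 0 1, by intro h; simpa using congrFun h 0, hq0 _⟩
  push_neg at hq0
  obtain ⟨v₀, hv₀⟩ := hq0
  -- A^n is central, hence scalar
  have hcenA : A ^ n ∈ Subgroup.center (GL (Fin 3) K) := by
    rw [← QuotientGroup.eq_one_iff]
    have h1 := pow_orderOf_eq_one (QuotientGroup.mk A :
      GL (Fin 3) K ⧸ Subgroup.center (GL (Fin 3) K))
    rw [horder] at h1
    simpa using h1
  obtain ⟨d, hd⟩ := gl_center_scalar hcenA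
  have hMn : M ^ n = d • 1 := by
    rw [hMdef, ← Units.val_pow_eq_pow_val]; exact hd
  have hgn : g ^ n = d • 1 := by
    rw [hgdef, ← map_pow, hMn, map_smul, map_one]
  -- q scales under powers of g
  have hqk : ∀ (k : ℕ) (v : Fin 3 → K), q ((g ^ k) v) = k0 ^ k * q v := by
    intro k
    induction k with
    | zero => intro v; simp
    | succ k ih =>
      intro v
      rw [pow_succ', Module.End.mul_apply, hq, ih, pow_succ']
      ring
  have hd2 : d * d = k0 ^ n := by
    have h1 := hqk n v₀
    rw [hgn] at h1
    have h2 : ((d • (1 : Module.End K (Fin 3 → K)))) v₀ = d • v₀ := rfl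
    rw [h2, hqs] at h1
    exact mul_right_cancel₀ hv₀ h1
  set f : Module.End K (Fin 3 → K) := k0⁻¹ • (g * g) with hfdef
  clear_value f
  have hfn : f ^ n = 1 := by
    have h1 : (g * g) ^ n = (g ^ n) * (g ^ n) := by
      rw [← pow_two, ← pow_mul, mul_comm 2 n, pow_mul, pow_two]
    have h2 : (d • (1 : Module.End K (Fin 3 → K))) * (d • 1) = (d * d) • 1 := by
      rw [smul_mul_smul_comm, one_mul]
    rw [hfdef, _root_.smul_pow, h1, hgn, h2, hd2, smul_smul, inv_pow,
      inv_mul_cancel₀ (pow_ne_zero n hk0), one_smul]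
  -- the minimal polynomial of f divides Xⁿ - 1
  have hnn : n ≠ 0 := by omega
  have hnK : (n : K) ≠ 0 := Nat.cast_ne_zero.mpr hnn
  have haevf : (Polynomial.aeval f) ((X : K[X]) ^ n - C 1) = 0 := by
    rw [map_sub, map_pow, aeval_X, aeval_C, hfn, map_one, sub_self]
  have hfint : IsIntegral K f := ⟨(X : K[X]) ^ n - C 1, monic_X_pow_sub_C 1 hnn, haevf⟩
  have hS0 : ((X : K[X]) ^ n - C 1) ≠ 0 := X_pow_sub_C_ne_zero (by omega) 1
  have hSsep : ((X : K[X]) ^ n - C 1).Separable := separable_X_pow_sub_C 1 hnK one_ne_zero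
  obtain ⟨ζ, hζ⟩ := hroots n (by omega)
  have hSsplit : Splits ((X : K[X]) ^ n - C 1) := by
    rw [splits_iff_card_roots, natDegree_X_pow_sub_C]
    have := hζ.card_nthRoots (1 : K)
    rw [if_pos ⟨1, one_pow n⟩] at this
    simpa [nthRoots] using this
  have hPdvd : minpoly K f ∣ (X : K[X]) ^ n - C 1 := minpoly.dvd K f haevf
  have hPsplit : Splits (minpoly K f) :=
    hSsplit.of_dvd hS0 hPdvd
  have hPsep : (minpoly K f).Separable := hSsep.of_dvd hPdvd
  by_cases hex : ∃ z ∈ (minpoly K f).roots, z * z ≠ 1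
  · -- an eigenvalue with z² ≠ 1 : its eigenvector is isotropic
    obtain ⟨z, hzmem, hz1⟩ := hex
    have hev := Module.End.hasEigenvalue_of_isRoot (isRoot_of_mem_roots hzmem)
    obtain ⟨v, hv⟩ := hev.exists_hasEigenvector
    have hfv : f v = z • v := hv.apply_eq_smul
    have hgg : g (g v) = (k0 * z) • v := by
      have h1 : k0⁻¹ • (g (g v)) = z • v := by
        rw [hfdef] at hfv
        simpa [LinearMap.smul_apply, Module.End.mul_apply] using hfv
      calc g (g v) = k0 • (k0⁻¹ • g (g v)) := by
            rw [smul_smul, mul_inv_cancel₀ hk0, one_smul]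
        _ = (k0 * z) • v := by rw [h1, smul_smul]
    have h1 : q (g (g v)) = k0 * (k0 * q v) := by rw [hq, hq]
    rw [hgg, hqs] at h1
    have hzz : z * z - 1 ≠ 0 := sub_ne_zero.mpr hz1
    have : q v = 0 := by
      have h3 : (k0 * k0) * ((z * z - 1) * q v) = 0 := by linear_combination h1
      rcases mul_eq_zero.mp h3 with h | h
      · exact absurd h (mul_ne_zero hk0 hk0)
      · rcases mul_eq_zero.mp h with h' | h'
        · exact absurd h' hzz
        · exact h'
    exact ⟨v, hv.2, this⟩
  · push_neg at hex
    -- all eigenvalues are ±1, so f² = 1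
    have hPmonic := minpoly.monic hfint
    have hPeq := hPsplit.eq_prod_roots_of_monic hPmonic
    have hnd := nodup_roots hPsep
    have hsub : (minpoly K f).roots ⊆ ({1, -1} : Multiset K) := by
      intro z hz
      have h := hex z hz
      have h2 : (z - 1) * (z + 1) = 0 := by linear_combination h
      rcases mul_eq_zero.mp h2 with h' | h'
      · have hz1 : z = 1 := sub_eq_zero.mp h'
        simp [hz1]
      · have hz1 : z = -1 := add_eq_zero_iff_eq_neg.mp h'
        simp [hz1]
    have hle : (minpoly K f).roots ≤ ({1, -1} : Multiset K) :=
      (Multiset.le_iff_subset hnd).mpr hsub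
    have hdvd2 : minpoly K f ∣ (X - C (1 : K)) * (X - C (-1)) := by
      rw [hPeq]
      have h := Multiset.prod_dvd_prod_of_le
        (Multiset.map_le_map (f := fun a => (X : K[X]) - C a) hle)
      simpa using h
    have hff : f * f = 1 := by
      obtain ⟨r, hr⟩ := hdvd2
      have h0 : (Polynomial.aeval f) ((X - C (1 : K)) * (X - C (-1))) = 0 := by
        rw [hr, map_mul, minpoly.aeval, zero_mul]
      rw [map_mul, map_sub, map_sub, aeval_X, aeval_C, aeval_C, map_one, map_neg, map_one,
        sub_neg_eq_add] at h0
      have h2 : (f - 1) * (f + 1) = f * f - 1 := by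
        rw [sub_mul, mul_add, mul_add, mul_one, one_mul, one_mul]
        abel
      rw [h2, sub_eq_zero] at h0
      exact h0
    have hGG : (g * g) * (g * g) = (k0 * k0) • 1 := by
      have h1 : f * f = (k0⁻¹ * k0⁻¹) • ((g * g) * (g * g)) := by
        rw [hfdef, smul_mul_smul_comm]
      rw [hff] at h1
      have hone : (k0 * k0) * (k0⁻¹ * k0⁻¹) = 1 := by
        field_simp
      calc (g * g) * (g * g)
          = ((k0 * k0) * (k0⁻¹ * k0⁻¹)) • ((g * g) * (g * g)) := by rw [hone, one_smul]
        _ = (k0 * k0) • ((k0⁻¹ * k0⁻¹) • ((g * g) * (g * g))) := by rw [smul_smul]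
        _ = (k0 * k0) • 1 := by rw [← h1]
    -- the two zero factorizations
    have e1 : (g * g) * ((k0 : K) • (1 : Module.End K (Fin 3 → K))) = k0 • (g * g) := by
      rw [mul_smul_comm, mul_one]
    have e2 : ((k0 : K) • (1 : Module.End K (Fin 3 → K))) * (g * g) = k0 • (g * g) := by
      rw [smul_mul_assoc, one_mul]
    have e3 : ((k0 : K) • (1 : Module.End K (Fin 3 → K))) * (k0 • 1) = (k0 * k0) • 1 := by
      rw [smul_mul_smul_comm, one_mul]
    have hfact1 : ((g * g) - k0 • 1) * ((g * g) + k0 • 1) = 0 := by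
      rw [sub_mul, mul_add, mul_add, e1, e2, e3, hGG]
      abel
    have hfact2 : ((g * g) + k0 • 1) * ((g * g) - k0 • 1) = 0 := by
      rw [add_mul, mul_sub, mul_sub, e1, e2, e3, hGG]
      abel
    -- a nonzero vector with g²u = -c·u
    have hU : ∃ u : Fin 3 → K, u ≠ 0 ∧ g (g u) = (-k0) • u := by
      rcases hsplit _ _ hfact1 with ⟨u, hu0, hu⟩ | h0
      · refine ⟨u, hu0, ?_⟩
        have : g (g u) + k0 • u = 0 := by
          simpa [LinearMap.add_apply, Module.End.mul_apply, LinearMap.smul_apply,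
            Module.End.one_apply] using hu
        rw [neg_smul]
        exact eq_neg_of_add_eq_zero_left this
      · exfalso
        rw [sub_eq_zero] at h0
        exact hgg2 c h0
    obtain ⟨u, hu0, hu⟩ := hU
    -- square root of -1
    obtain ⟨ξ, hξ⟩ := hroots 4 (by norm_num)
    have hii : ξ * ξ = -1 := by
      have h4 : ξ ^ 4 = 1 := hξ.pow_eq_one
      have h2 : ξ ^ 2 ≠ 1 := hξ.pow_ne_one_of_pos_of_lt (by norm_num) (by norm_num)
      have h3 : (ξ ^ 2 - 1) * (ξ ^ 2 + 1) = 0 := by linear_combination h4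
      rcases mul_eq_zero.mp h3 with h | h
      · exact absurd (sub_eq_zero.mp h) h2
      · have h5 : ξ ^ 2 = -1 := add_eq_zero_iff_eq_neg.mp h
        linear_combination h5
    by_cases hsq : ∃ t : K, t * t = k0
    · -- c is a square: produce an isotropic vector inside the (-c)-eigenspace of g²
      obtain ⟨t, ht⟩ := hsq
      set s : K := ξ * t with hsdef
      have hss : s * s = -k0 := by
        calc s * s = (ξ * ξ) * (t * t) := by ring
          _ = -k0 := by rw [hii, ht]; ring
      set w : Fin 3 → K := g u + s • u with hwdef
      by_cases hw : w = 0
      · have hgu : g u = (-s) • u := by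
          rw [neg_smul]
          exact eq_neg_of_add_eq_zero_left (hwdef ▸ hw)
        have h1 : q (g u) = k0 * q u := hq u
        rw [hgu, hqs] at h1
        have h2 : (2 * k0) * q u = 0 := by linear_combination q u * hss - h1
        have h3 : q u = 0 := by
          rcases mul_eq_zero.mp h2 with h | h
          · exact absurd h (mul_ne_zero two_ne_zero hk0)
          · exact h
        exact ⟨u, hu0, h3⟩
      · have hgw : g w = s • w := by
          have h1 : g w = g (g u) + s • g u := by rw [hwdef, map_add, map_smul]
          rw [hu] at h1
          rw [h1, hwdef, smul_add, smul_smul, hss]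
          abel
        have h1 : q (g w) = k0 * q w := hq w
        rw [hgw, hqs] at h1
        have h2 : (2 * k0) * q w = 0 := by linear_combination q w * hss - h1
        have h3 : q w = 0 := by
          rcases mul_eq_zero.mp h2 with h | h
          · exact absurd h (mul_ne_zero two_ne_zero hk0)
          · exact h
        exact ⟨w, hw, h3⟩
    · -- c is not a square: derive a contradiction via four independent vectors
      exfalso
      have hsq' : ∀ y : K, y * y ≠ -k0 := by
        intro y hy
        exact hsq ⟨ξ * y, by
          calc (ξ * y) * (ξ * y) = (ξ * ξ) * (y * y) := by ring
            _ = k0 := by rw [hii, hy]; ring⟩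
      have hsqc : ∀ y : K, y * y ≠ k0 := fun y hy => hsq ⟨y, hy⟩
      -- a nonzero vector with g²u' = c·u'
      have hU' : ∃ u' : Fin 3 → K, u' ≠ 0 ∧ g (g u') = k0 • u' := by
        rcases hsplit _ _ hfact2 with ⟨u', hu0', hu'⟩ | h0
        · refine ⟨u', hu0', ?_⟩
          have : g (g u') - k0 • u' = 0 := by
            simpa [LinearMap.sub_apply, Module.End.mul_apply, LinearMap.smul_apply,
              Module.End.one_apply] using hu'
          exact sub_eq_zero.mp this
        · have h0' : g * g = ((-c : Kˣ) : K) • 1 := by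
            have h1 : g * g = -(k0 • (1 : Module.End K (Fin 3 → K))) :=
              eq_neg_of_add_eq_zero_left h0
            have h2 : ((-c : Kˣ) : K) • (1 : Module.End K (Fin 3 → K)) = -(k0 • 1) := by
              rw [Units.val_neg, ← hk0def]
              exact neg_smul k0 (1 : Module.End K (Fin 3 → K))
            rw [h1, h2]
          exact absurd h0' (hgg2 (-c))
      obtain ⟨u', hu0', hu'⟩ := hU'
      -- no g-eigenvector lies in either plane
      have pair : ∀ e : K, (∀ y : K, y * y ≠ e) → ∀ x : Fin 3 → K, x ≠ 0 → g (g x) = e • x →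
          ∀ a b : K, a • x + b • g x = 0 → a = 0 ∧ b = 0 := by
        intro e he x hx hgx a b hab
        by_cases hb : b = 0
        · subst hb
          rw [zero_smul, add_zero] at hab
          rcases smul_eq_zero.mp hab with h | h
          · exact ⟨h, rfl⟩
          · exact absurd h hx
        · exfalso
          have hbg : b • g x = -(a • x) := eq_neg_of_add_eq_zero_right hab
          have hgx1 : g x = (-(a / b)) • x := by
            calc g x = b⁻¹ • (b • g x) := by rw [smul_smul, inv_mul_cancel₀ hb, one_smul]
              _ = b⁻¹ • -(a • x) := by rw [hbg]
              _ = (-(a / b)) • x := by rw [smul_neg, smul_smul, neg_smul, div_eq_inv_mul]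
          have h2 : g (g x) = ((-(a / b)) * (-(a / b))) • x := by
            rw [hgx1, map_smul, hgx1, smul_smul]
          rw [hgx] at h2
          have h3 : (e - (-(a / b)) * (-(a / b))) • x = 0 := by
            rw [sub_smul, h2, sub_self]
          rcases smul_eq_zero.mp h3 with h | h
          · exact he (-(a / b)) (by linear_combination -h)
          · exact hx h
      -- the four vectors u, gu, u', gu' are linearly independent : contradiction in dim 3
      have hli : LinearIndependent K ![u, g u, u', g u'] := by
        rw [Fintype.linearIndependent_iff]
        intro a h
        rw [Fin.sum_univ_four] at h
        simp only [Matrix.cons_val_zero, Matrix.cons_val_one, Matrix.head_cons,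
          Matrix.cons_val_two, Matrix.tail_cons, Matrix.cons_val_three] at h
        have h2 : a 0 • g (g u) + a 1 • g (g (g u)) + a 2 • g (g u') + a 3 • g (g (g u'))
            = 0 := by
          have h2' := congrArg (fun x => g (g x)) h
          simpa only [map_add, map_smul, map_zero] using h2'
        have h3 : g (g (g u)) = (-k0) • g u := by rw [hu, map_smul]
        have h3' : g (g (g u')) = k0 • g u' := by rw [hu', map_smul]
        rw [h3, h3', hu, hu'] at h2
        have key : (2 * k0) • (a 0 • u + a 1 • g u) =
            k0 • (a 0 • u + a 1 • g u + a 2 • u' + a 3 • g u')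
              - (a 0 • ((-k0) • u) + a 1 • ((-k0) • g u)
                + a 2 • (k0 • u') + a 3 • (k0 • g u')) := by
          module
        rw [h, h2, smul_zero, sub_zero] at key
        have h01 : a 0 • u + a 1 • g u = 0 := by
          rcases smul_eq_zero.mp key with hcase | hcase
          · exact absurd hcase (mul_ne_zero two_ne_zero hk0)
          · exact hcase
        obtain ⟨ha0, ha1⟩ := pair (-k0) hsq' u hu0 hu (a 0) (a 1) h01
        have h23 : a 2 • u' + a 3 • g u' = 0 := by
          rw [ha0, ha1] at h
          simpa using h
        obtain ⟨ha2, ha3⟩ := pair k0 hsqc u' hu0' hu' (a 2) (a 3) h23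
        intro i
        fin_cases i <;> assumption
      have hcard := hli.fintype_card_le_finrank
      rw [Module.finrank_fin_fun] at hcard
      simp at hcard
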